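/- Let a, b, d₁, d₂ be positive integers with a·d₁ = b·d₂, let g = gcd(a,b), and set ζ = exp(2πi/b). Let A, B be nonzero polynomials with complex coefficients. Then: (1) for every integer k, A^a + (ζ^k·B)^b = A^a + B^b; and (2) for integers k, k′, there exists λ ∈ ℂ with λ^{d₁}·A = A and λ^{d₂}·(ζ^k·B) = ζ^{k′}·B if and only if k ≡ k′ (mod g). Consequently, if g > 1, the g pairs (A, B), (A, ζ·B), …, (A, ζ^{g−1}·B) lie in g pairwise distinct orbits of the action λ·(A,B) = (λ^{d₁}·A, λ^{d₂}·B) of ℂ* yet all have the same value of A^a + B^b; in particular the pseudo-discriminant is at least g-to-one, and for it to be generically injective it is necessary that gcd(a,b) = 1. -/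

import Mathlib

open Complex Polynomial

/-- With `a·d₁ = b·d₂`, `g = gcd(a,b)`, `ζ = exp(2πi/b)`, and `A, B` nonzero complex
polynomials:
(1) replacing `B` by `ζ^k·B` does not change `A^a + B^b`;
(2) `(A, ζ^k·B)` and `(A, ζ^{k'}·B)` lie in the same orbit of the weighted ℂ*-action
`λ·(A,B) = (λ^{d₁}A, λ^{d₂}B)` iff `k ≡ k' (mod g)`.
Consequently, if `g > 1`, the pairs `(A, ζ^k·B)` for `0 ≤ k < g` lie in `g` pairwise
distinct orbits yet all have the same pseudo-discriminant `A^a + B^b`; in particular the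
pseudo-discriminant is at least `g`-to-one, and generic injectivity forces `gcd(a,b) = 1`. -/
theorem pseudoDiscriminant_gcd_to_one (a b d₁ d₂ : ℕ)
    (ha : 0 < a) (hb : 0 < b) (hd₁ : 0 < d₁) (hd₂ : 0 < d₂)
    (hN : a * d₁ = b * d₂) (g : ℕ) (hg : g = Nat.gcd a b)
    (ζ : ℂ) (hζ : ζ = Complex.exp (2 * Real.pi * Complex.I / (b : ℂ)))
    (A B : Polynomial ℂ) (hA : A ≠ 0) (hB : B ≠ 0) :
    (∀ k : ℤ, A ^ a + ((ζ ^ k) • B) ^ b = A ^ a + B ^ b) ∧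
    (∀ k k' : ℤ,
      (∃ l : ℂ, (l ^ d₁) • A = A ∧ (l ^ d₂) • ((ζ ^ k) • B) = (ζ ^ k') • B) ↔
        (g : ℤ) ∣ (k - k')) ∧
    (1 < g → ∀ k k' : ℕ, k < g → k' < g → k ≠ k' →
      ¬ ∃ l : ℂ, (l ^ d₁) • A = A ∧ (l ^ d₂) • ((ζ ^ k) • B) = (ζ ^ k') • B) := by
  have hbne : (b : ℂ) ≠ 0 := Nat.cast_ne_zero.mpr hb.ne'
  have hd1ne : (d₁ : ℂ) ≠ 0 := Nat.cast_ne_zero.mpr hd₁.ne'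
  have hζ0 : ζ ≠ 0 := hζ ▸ Complex.exp_ne_zero _
  have hζb : ζ ^ b = 1 := by
    rw [hζ, ← Complex.exp_nat_mul, mul_comm, div_mul_cancel₀ _ hbne,
      Complex.exp_two_pi_mul_I]
  have hζm : ∀ m : ℤ, ζ ^ m = Complex.exp (m * (2 * Real.pi * Complex.I / (b : ℂ))) := by
    intro m
    rw [Complex.exp_int_mul, hζ]
  have hsmul : ∀ (c : ℂ) (P : Polynomial ℂ), P ≠ 0 → (c • P = P ↔ c = 1) := by
    intro c P hP
    constructor
    · intro h
      have h2 : (c - 1) • P = 0 := by rw [sub_smul, one_smul, h, sub_self]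
      rcases smul_eq_zero.mp h2 with h3 | h3
      · exact sub_eq_zero.mp h3
      · exact absurd h3 hP
    · rintro rfl; simp
  have hinj : ∀ c c' : ℂ, c • B = c' • B ↔ c = c' :=
    fun c c' => ⟨fun h => smul_left_injective ℂ hB h, fun h => by rw [h]⟩
  have h2πI : (2 * (Real.pi : ℂ) * Complex.I) ≠ 0 :=
    mul_ne_zero (mul_ne_zero two_ne_zero (Complex.ofReal_ne_zero.mpr Real.pi_ne_zero))
      Complex.I_ne_zero
  -- key equivalence
  have key : ∀ m : ℤ, (∃ l : ℂ, l ^ d₁ = 1 ∧ l ^ d₂ = ζ ^ m) ↔ (g : ℤ) ∣ m := by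
    intro m
    constructor
    · rintro ⟨l, hl1, hl2⟩
      haveI : NeZero d₁ := ⟨hd₁.ne'⟩
      obtain ⟨j, hj, rfl⟩ :=
        (Complex.isPrimitiveRoot_exp d₁ hd₁.ne').eq_pow_of_pow_eq_one hl1
      rw [← pow_mul, ← Complex.exp_nat_mul, hζm, Complex.exp_eq_exp_iff_exists_int] at hl2
      obtain ⟨t, ht⟩ := hl2
      have hC : ((j : ℂ) * d₂) * b = m * d₁ + t * d₁ * b := by
        field_simp at ht
        push_cast at ht
        have h5 : (2 * (Real.pi : ℂ) * Complex.I) * (((j : ℂ) * d₂) * b) =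
            (2 * (Real.pi : ℂ) * Complex.I) * (m * d₁ + t * d₁ * b) := by
          linear_combination (2 * (Real.pi : ℂ) * Complex.I) * ht
        exact mul_left_cancel₀ h2πI h5
      have hZ : (j : ℤ) * d₂ * b = m * d₁ + t * d₁ * b := by exact_mod_cast hC
      have hN' : (b : ℤ) * d₂ = a * d₁ := by exact_mod_cast hN.symm
      have h3 : (j : ℤ) * (a * d₁) = m * d₁ + t * d₁ * b := by
        rw [← hN']; linear_combination hZ
      have hkey : ((j : ℤ) * a - t * b - m) * d₁ = 0 := by linear_combination h3
      have hd1z : (d₁ : ℤ) ≠ 0 := Int.natCast_ne_zero.mpr hd₁.ne'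
      have hm : m = (j : ℤ) * a - t * b := by
        rcases mul_eq_zero.mp hkey with h | h
        · linarith [h]
        · exact absurd h hd1z
      have hga : (g : ℤ) ∣ (a : ℤ) := Int.natCast_dvd_natCast.mpr (hg ▸ Nat.gcd_dvd_left a b)
      have hgb : (g : ℤ) ∣ (b : ℤ) := Int.natCast_dvd_natCast.mpr (hg ▸ Nat.gcd_dvd_right a b)
      rw [hm]
      exact dvd_sub (Dvd.dvd.mul_left hga _) (Dvd.dvd.mul_left hgb _)
    · rintro ⟨s, rfl⟩
      have hbez : (g : ℤ) = a * Int.gcdA a b + b * Int.gcdB a b := by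
        rw [hg]
        exact_mod_cast Int.gcd_eq_gcd_ab (a : ℤ) (b : ℤ)
      set u : ℤ := Int.gcdA a b * s with hu
      set v : ℤ := Int.gcdB a b * s with hv
      have hm : (g : ℤ) * s = a * u + b * v := by rw [hu, hv]; linear_combination s * hbez
      set z : ℂ := Complex.exp (2 * Real.pi * Complex.I / (d₁ : ℂ)) with hz
      have hz0 : z ≠ 0 := Complex.exp_ne_zero _
      have hzd1 : z ^ d₁ = 1 := by
        rw [hz, ← Complex.exp_nat_mul, mul_comm, div_mul_cancel₀ _ hd1ne,
          Complex.exp_two_pi_mul_I]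
      refine ⟨z ^ u, ?_, ?_⟩
      · rw [← zpow_natCast (z ^ u), ← zpow_mul, mul_comm, zpow_mul, zpow_natCast, hzd1,
          one_zpow]
      · rw [← zpow_natCast (z ^ u), ← zpow_mul]
        rw [hz, ← Complex.exp_int_mul, hζm, Complex.exp_eq_exp_iff_exists_int]
        refine ⟨-v, ?_⟩
        have hNC : (a : ℂ) * d₁ = b * d₂ := by exact_mod_cast hN
        have hmC : ((g : ℤ) * s : ℂ) = a * u + b * v := by exact_mod_cast hm
        push_cast at hmC ⊢
        have hcoef : (u : ℂ) * (d₂ : ℂ) / (d₁ : ℂ) = (g : ℂ) * (s : ℂ) / (b : ℂ) + -(v : ℂ) := by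
          rw [div_add' _ _ _ hbne, div_eq_div_iff hd1ne hbne]
          linear_combination (-(u : ℂ)) * hNC - (d₁ : ℂ) * hmC
        calc ((u : ℂ)) * (d₂ : ℂ) * (2 * (Real.pi : ℂ) * Complex.I / (d₁ : ℂ))
            = ((u : ℂ) * (d₂ : ℂ) / (d₁ : ℂ)) * (2 * (Real.pi : ℂ) * Complex.I) := by ring
          _ = ((g : ℂ) * (s : ℂ) / (b : ℂ) + -(v : ℂ)) * (2 * (Real.pi : ℂ) * Complex.I) := by
              rw [hcoef]
          _ = (g : ℂ) * (s : ℂ) * (2 * (Real.pi : ℂ) * Complex.I / (b : ℂ)) +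
              -(v : ℂ) * (2 * (Real.pi : ℂ) * Complex.I) := by ring
  have hconv : ∀ (k k' : ℤ) (l : ℂ),
      ((l ^ d₁) • A = A ∧ (l ^ d₂) • ((ζ ^ k) • B) = (ζ ^ k') • B) ↔
        (l ^ d₁ = 1 ∧ l ^ d₂ = ζ ^ (k' - k)) := by
    intro k k' l
    rw [hsmul _ A hA, smul_smul, hinj, zpow_sub₀ hζ0,
      eq_div_iff (zpow_ne_zero _ hζ0)]
  have part2 : ∀ k k' : ℤ,
      (∃ l : ℂ, (l ^ d₁) • A = A ∧ (l ^ d₂) • ((ζ ^ k) • B) = (ζ ^ k') • B) ↔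
        (g : ℤ) ∣ (k - k') := by
    intro k k'
    rw [show ((g : ℤ) ∣ (k - k')) ↔ ((g : ℤ) ∣ (k' - k)) from dvd_sub_comm, ← key (k' - k)]
    exact exists_congr (hconv k k')
  refine ⟨?_, part2, ?_⟩
  · intro k
    congr 1
    rw [_root_.smul_pow, ← zpow_natCast (ζ ^ k), ← zpow_mul, mul_comm, zpow_mul, zpow_natCast,
      hζb, one_zpow, one_smul]
  · intro hg1 k k' hk hk' hne hcon
    obtain ⟨l, hl1, hl2⟩ := hcon
    have hcast : ∀ n : ℕ, ζ ^ n = ζ ^ (n : ℤ) := fun n => (zpow_natCast ζ n).symm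
    rw [hcast k, hcast k'] at hl2
    have hdvd : (g : ℤ) ∣ ((k : ℤ) - k') := (part2 k k').mp ⟨l, hl1, hl2⟩
    have hdvd' : (g : ℤ) ∣ |(k : ℤ) - k'| := (dvd_abs _ _).mpr hdvd
    have hpos : 0 < |(k : ℤ) - k'| := abs_pos.mpr (by
      intro h
      exact hne (by exact_mod_cast sub_eq_zero.mp h))
    have := Int.le_of_dvd hpos hdvd'
    have habs : |(k : ℤ) - k'| < g := by
      rw [abs_lt]
      omega
    omega
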